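/- arXiv:2510.01705 — 5 statements merged into one kernel-verified Lean document; each statement's English description precedes it below -/
import Mathlib

section
/- Let P be a continuous linear projection on B with ran A(z₀) ⊆ ran P, and set Q = I − P. Then the function z ↦ P A(z) + (z − z₀)⁻¹ Q A(z), defined on U \ {z₀}, extends to an analytic function on all of U whose value at z₀ is P A(z₀) + Q A'(z₀), where A' is the derivative of A. -/
open scoped Topology

/-- dslope of an analytic (near the point) function is analytic at the point. -/
theorem analyticAt_dslope_of_analyticAt {E : Type*} [NormedAddCommGroup E] [NormedSpace ℂ E]
    {f : ℂ → E} {a : ℂ} (hf : AnalyticAt ℂ f a) : AnalyticAt ℂ (dslope f a) a := by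
  obtain ⟨p, hp⟩ := hf
  exact ⟨p.fslope, hp.has_fpower_series_dslope_fslope⟩

theorem analyticAt_dslope_of_ne {E : Type*} [NormedAddCommGroup E] [NormedSpace ℂ E]
    {f : ℂ → E} {a b : ℂ} (hf : AnalyticAt ℂ f b) (hb : b ≠ a) :
    AnalyticAt ℂ (dslope f a) b := by
  have h1 : AnalyticAt ℂ (slope f a) b := by
    have : AnalyticAt ℂ (fun z => (z - a)⁻¹ • (f z - f a)) b := by
      apply AnalyticAt.smul
      · exact ((analyticAt_id.sub analyticAt_const)).inv (sub_ne_zero.mpr hb)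
      · exact hf.sub analyticAt_const
    exact this.congr (by filter_upwards with z; simp [slope_def_field, div_eq_inv_mul,
      slope, vsub_eq_sub])
  exact h1.congr (dslope_eventuallyEq_slope_of_ne f hb).symm

/-- Let `B` be a complex Banach space, `U ⊆ ℂ` open, `z₀ ∈ U`, and `A : U → L(B)`
analytic. Let `P` be a continuous linear projection on `B` with `ran A(z₀) ⊆ ran P`, and set
`Q = I − P`. Then the function `z ↦ P A(z) + (z − z₀)⁻¹ Q A(z)`, defined on `U \ {z₀}`, extends
to an analytic function on all of `U` whose value at `z₀` is `P A(z₀) + Q A'(z₀)`, where `A'`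
is the derivative of `A`. -/
theorem stmt1 {B : Type*} [NormedAddCommGroup B] [NormedSpace ℂ B] [CompleteSpace B]
    (U : Set ℂ) (hU : IsOpen U) (z₀ : ℂ) (hz₀ : z₀ ∈ U)
    (A : ℂ → (B →L[ℂ] B)) (hA : AnalyticOnNhd ℂ A U)
    (P : B →L[ℂ] B) (hP : P * P = P)
    (hrange : LinearMap.range (A z₀ : B →ₗ[ℂ] B) ≤ LinearMap.range (P : B →ₗ[ℂ] B)) :
    ∃ F : ℂ → (B →L[ℂ] B),
      AnalyticOnNhd ℂ F U ∧
      (∀ z ∈ U, z ≠ z₀ →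
        F z = P * A z + (z - z₀)⁻¹ • (((1 : B →L[ℂ] B) - P) * A z)) ∧
      F z₀ = P * A z₀ + ((1 : B →L[ℂ] B) - P) * deriv A z₀ := by
  set Q : B →L[ℂ] B := 1 - P with hQ
  set G : ℂ → (B →L[ℂ] B) := fun z => Q * A z with hG
  have hGanal : AnalyticOnNhd ℂ G U := fun z hz => (analyticAt_const).mul (hA z hz)
  -- G z₀ = 0
  have hG0 : G z₀ = 0 := by
    ext x
    have hx : A z₀ x ∈ LinearMap.range (P : B →ₗ[ℂ] B) := hrange ⟨x, rfl⟩
    obtain ⟨y, hy⟩ := hx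
    have hPy : P (P y) = P y := by
      have := congrFun (congrArg (fun T : B →L[ℂ] B => (T : B → B)) hP) y
      simpa using this
    simp [hG, hQ, ContinuousLinearMap.mul_apply, ← hy, hPy]
  refine ⟨fun z => P * A z + dslope G z₀ z, ?_, ?_, ?_⟩
  · intro z hz
    refine (analyticAt_const.mul (hA z hz)).add ?_
    rcases eq_or_ne z z₀ with rfl | hne
    · exact analyticAt_dslope_of_analyticAt (hGanal z hz)
    · exact analyticAt_dslope_of_ne (hGanal z hz) hne
  · intro z hz hne
    show P * A z + dslope G z₀ z = _
    congr 1
    rw [dslope_of_ne _ hne, slope_def_module, hG0, sub_zero]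
  · show P * A z₀ + dslope G z₀ z₀ = _
    congr 1
    rw [dslope_same]
    have hdA : DifferentiableAt ℂ A z₀ := (hA z₀ hz₀).differentiableAt
    simpa [hG] using deriv_const_mul Q hdA
end

section
/- Let P₁ be a continuous linear projection on B with ran P₁ = ran A(z₀). Then sup_{0 < |z − z₀| < δ} |z − z₀|^{d−1} ‖A(z)⁻¹ P₁‖ < ∞ for some δ > 0; equivalently, the function z ↦ A(z)⁻¹ P₁ is meromorphic at z₀ with a pole of order at most d − 1. -/
open scoped Topology

/-- `f` has a pole of order exactly `d` at `z₀`: near `z₀` (off `z₀`),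
`f z = (z - z₀)⁻ᵈ • g z` for some function `g` analytic at `z₀` with `g z₀ ≠ 0`.
For `d = 0` this means `f` extends analytically across `z₀` with nonzero value. -/
def HasPoleOrderAt {E : Type*} [NormedAddCommGroup E] [NormedSpace ℂ E]
    (f : ℂ → E) (z₀ : ℂ) (d : ℕ) : Prop :=
  ∃ g : ℂ → E, AnalyticAt ℂ g z₀ ∧ g z₀ ≠ 0 ∧
    ∀ᶠ z in 𝓝[≠] z₀, f z = ((z - z₀)⁻¹) ^ d • g z

/-- In the setting of an analytic Fredholm-valued function `A` on an open connected
set `U`, invertible on a punctured neighborhood of `z₀` but not at `z₀`, with `A(z)⁻¹` having a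
pole of order `d ≥ 1` at `z₀`: if `P₁` is a continuous linear projection with
`ran P₁ = ran A(z₀)`, then `sup_{0 < |z − z₀| < δ} |z − z₀|^{d−1} ‖A(z)⁻¹ P₁‖ < ∞` for some
`δ > 0`. -/
theorem stmt3
    {B : Type*} [NormedAddCommGroup B] [NormedSpace ℂ B] [CompleteSpace B]
    (U : Set ℂ) (hU : IsOpen U) (hUconn : IsConnected U) (z₀ : ℂ) (hz₀U : z₀ ∈ U)
    (A : ℂ → (B →L[ℂ] B)) (hA : AnalyticOnNhd ℂ A U)
    (Acoef : ℕ → (B →L[ℂ] B))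
    (hAcoef : ∀ᶠ z in 𝓝 z₀, HasSum (fun j : ℕ => (z - z₀) ^ j • Acoef j) (A z))
    (hFred : ∀ z ∈ U, FiniteDimensional ℂ (LinearMap.ker (A z : B →ₗ[ℂ] B)) ∧
      IsClosed ((LinearMap.range (A z : B →ₗ[ℂ] B) : Submodule ℂ B) : Set B) ∧
      FiniteDimensional ℂ (B ⧸ LinearMap.range (A z : B →ₗ[ℂ] B)))
    (hInv : ∀ᶠ z in 𝓝[≠] z₀, IsUnit (A z))
    (hNotInv : ¬ IsUnit (A z₀))
    (d : ℕ) (hd : 1 ≤ d)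
    (hpole : HasPoleOrderAt (fun z => Ring.inverse (A z)) z₀ d)
    (P₁ : B →L[ℂ] B) (hP₁proj : P₁ * P₁ = P₁)
    (hP₁range : LinearMap.range (P₁ : B →ₗ[ℂ] B) = LinearMap.range (A z₀ : B →ₗ[ℂ] B)) :
    ∃ δ > (0 : ℝ), ∃ C : ℝ,
      ∀ z : ℂ, z ≠ z₀ → ‖z - z₀‖ < δ →
        ‖z - z₀‖ ^ (d - 1) * ‖Ring.inverse (A z) * P₁‖ ≤ C := by
  
  obtain ⟨g, hg, hg0, hgev⟩ := hpole
  have hAz₀ : AnalyticAt ℂ A z₀ := hA z₀ hz₀U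
  -- g z * A z = (z - z₀)^d • 1 on a punctured neighborhood
  have hφ : ∀ᶠ z in 𝓝[≠] z₀, g z * A z = (z - z₀) ^ d • (1 : B →L[ℂ] B) := by
    filter_upwards [hgev, hInv, self_mem_nhdsWithin] with z hz hzu hzne
    have h1 : Ring.inverse (A z) * A z = 1 := Ring.inverse_mul_cancel _ hzu
    rw [hz] at h1
    have hzz : (z - z₀) ≠ 0 := sub_ne_zero.mpr hzne
    calc g z * A z = (z - z₀) ^ d • ((((z - z₀)⁻¹) ^ d • g z) * A z) := by
          rw [smul_mul_assoc, smul_smul, ← mul_pow, mul_inv_cancel₀ hzz, one_pow, one_smul]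
      _ = (z - z₀) ^ d • 1 := by rw [h1]
  have hgA0 : g z₀ * A z₀ = 0 := by
    have h1 : Filter.Tendsto (fun z => g z * A z) (𝓝[≠] z₀) (𝓝 (g z₀ * A z₀)) :=
      ((hg.continuousAt.mul hAz₀.continuousAt).tendsto).mono_left nhdsWithin_le_nhds
    have h2 : Filter.Tendsto (fun z => (z - z₀) ^ d • (1 : B →L[ℂ] B)) (𝓝[≠] z₀)
        (𝓝 (0 : B →L[ℂ] B)) := by
      have hc : Continuous (fun z : ℂ => (z - z₀) ^ d • (1 : B →L[ℂ] B)) := by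
        fun_prop
      have := (hc.tendsto z₀).mono_left (nhdsWithin_le_nhds (s := {z₀}ᶜ))
      simpa [sub_self, zero_pow (Nat.one_le_iff_ne_zero.mp hd), zero_smul] using this
    exact tendsto_nhds_unique (h1.congr' hφ) h2
  have hgP : g z₀ * P₁ = 0 := by
    ext x
    have hx : P₁ x ∈ LinearMap.range (A z₀ : B →ₗ[ℂ] B) := hP₁range ▸ LinearMap.mem_range_self (P₁ : B →ₗ[ℂ] B) x
    obtain ⟨y, hy⟩ := hx
    have h0 := congrArg (fun T : B →L[ℂ] B => T y) hgA0
    simp only [ContinuousLinearMap.mul_apply, ContinuousLinearMap.zero_apply] at h0 ⊢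
    rw [← hy]; exact h0
  -- F := g · P₁ is analytic, vanishes at z₀, so F = O(z - z₀)
  set F : ℂ → (B →L[ℂ] B) := fun z => g z * P₁ with hF
  have hFan : AnalyticAt ℂ F z₀ := hg.mul analyticAt_const
  have hFdiff : DifferentiableAt ℂ F z₀ := hFan.differentiableAt
  have hbigO : (fun z => F z) =O[𝓝 z₀] (fun z => z - z₀) := by
    have := hFdiff.isBigO_sub
    simpa [hF, hgP] using this
  obtain ⟨c, hc⟩ := hbigO.bound
  have hev : ∀ᶠ z in 𝓝[≠] z₀,
      (Ring.inverse (A z) = ((z - z₀)⁻¹) ^ d • g z) ∧ ‖F z‖ ≤ c * ‖z - z₀‖ :=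
    hgev.and (hc.filter_mono nhdsWithin_le_nhds)
  obtain ⟨δ, hδ, hsub⟩ := Metric.mem_nhdsWithin_iff.mp hev
  refine ⟨δ, hδ, c, fun z hzne hzlt => ?_⟩
  have hdz : z ∈ Metric.ball z₀ δ ∩ {z₀}ᶜ :=
    ⟨by simpa [Metric.mem_ball, dist_eq_norm] using hzlt, hzne⟩
  obtain ⟨hinv, hbnd⟩ := hsub hdz
  have hzz : (z - z₀) ≠ 0 := sub_ne_zero.mpr hzne
  have hr : ‖z - z₀‖ ≠ 0 := norm_ne_zero_iff.mpr hzz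
  set r : ℝ := ‖z - z₀‖ with hrdef
  have hnorm : ‖Ring.inverse (A z) * P₁‖ = r⁻¹ ^ d * ‖F z‖ := by
    rw [hinv, smul_mul_assoc]
    rw [norm_smul ((z - z₀)⁻¹ ^ d) (g z * P₁)]
    simp [norm_inv, norm_pow, hrdef, F]
  rw [hnorm]
  calc r ^ (d - 1) * (r⁻¹ ^ d * ‖F z‖)
      ≤ r ^ (d - 1) * (r⁻¹ ^ d * (c * r)) := by
        apply mul_le_mul_of_nonneg_left
        · exact mul_le_mul_of_nonneg_left hbnd (by positivity)
        · positivity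
    _ = c * (r ^ (d - 1) * r * (r ^ d)⁻¹) := by rw [← inv_pow]; ring
    _ = c := by
        rw [pow_sub_one_mul (Nat.one_le_iff_ne_zero.mp hd) r,
          mul_inv_cancel₀ (pow_ne_zero d hr), mul_one]
end

section
/- For every integer m ≥ 1, the pole order d of A(z)⁻¹ at z₀ equals m if and only if A⁽ᵐ⁾(z₀) is invertible and A⁽ᵐ⁻¹⁾(z₀) is not invertible. -/
open scoped Topology

/-- Factor out a zero of an analytic function. -/
lemma stmt9_factor {E : Type*} [NormedAddCommGroup E] [NormedSpace ℂ E]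
    {F : ℂ → E} {z₀ : ℂ} (hF : AnalyticAt ℂ F z₀) (h0 : F z₀ = 0) :
    ∃ G : ℂ → E, AnalyticAt ℂ G z₀ ∧ ∀ z, F z = (z - z₀) • G z := by
  refine ⟨dslope F z₀, ?_, ?_⟩
  · obtain ⟨p, hp⟩ := hF
    exact ⟨_, hp.has_fpower_series_dslope_fslope⟩
  · intro z
    rcases eq_or_ne z z₀ with rfl | hz
    · simp [h0]
    · rw [dslope_of_ne _ hz, slope_def_module, h0, sub_zero, smul_smul,
        mul_inv_cancel₀ (sub_ne_zero.mpr hz), one_smul]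

lemma stmt9_proj_mul {R : Type*} [Ring R] [Algebra ℂ R] {p : R} (hp : p * p = p) {a b : ℂ}
    (hab : a * b = 1) : (p + a • (1 - p)) * (p + b • (1 - p)) = 1 := by
  have hpq : p * (1 - p) = 0 := by rw [mul_sub, mul_one, hp, sub_self]
  have hqp : (1 - p) * p = 0 := by rw [sub_mul, one_mul, hp, sub_self]
  have hqq : (1 - p) * (1 - p) = (1 - p) := by rw [mul_sub, mul_one, hqp, sub_zero]
  have expand : (p + a • (1 - p)) * (p + b • (1 - p)) =
      p * p + b • (p * (1 - p)) + (a • ((1 - p) * p) + (a * b) • ((1 - p) * (1 - p))) := by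
    rw [add_mul, mul_add, mul_add, smul_mul_assoc, smul_mul_assoc, mul_smul_comm,
      mul_smul_comm, smul_smul]
  rw [expand, hp, hpq, hqp, hqq, smul_zero, smul_zero, add_zero, zero_add, hab, one_smul]
  abel

lemma stmt9_proj_isUnit {R : Type*} [Ring R] [Algebra ℂ R] {p : R} (hp : p * p = p) {c : ℂ}
    (hc : c ≠ 0) : IsUnit (p + c • (1 - p)) :=
  ⟨⟨p + c • (1 - p), p + c⁻¹ • (1 - p),
    stmt9_proj_mul hp (mul_inv_cancel₀ hc), stmt9_proj_mul hp (inv_mul_cancel₀ hc)⟩, rfl⟩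

/-- for every integer `m ≥ 1`, the pole order `d` of `A(z)⁻¹` at `z₀` equals `m`
if and only if `A⁽ᵐ⁾(z₀)` is invertible and `A⁽ᵐ⁻¹⁾(z₀)` is not invertible. -/
theorem stmt9
    {B : Type*} [NormedAddCommGroup B] [NormedSpace ℂ B] [CompleteSpace B]
    (U : Set ℂ) (hU : IsOpen U) (hUconn : IsConnected U) (z₀ : ℂ) (hz₀U : z₀ ∈ U)
    (A : ℂ → (B →L[ℂ] B)) (hA : AnalyticOnNhd ℂ A U)
    (Acoef : ℕ → (B →L[ℂ] B))
    (hAcoef : ∀ᶠ z in 𝓝 z₀, HasSum (fun j : ℕ => (z - z₀) ^ j • Acoef j) (A z))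
    (hFred : ∀ z ∈ U, FiniteDimensional ℂ (LinearMap.ker (A z : B →ₗ[ℂ] B)) ∧
      IsClosed ((LinearMap.range (A z : B →ₗ[ℂ] B) : Submodule ℂ B) : Set B) ∧
      FiniteDimensional ℂ (B ⧸ LinearMap.range (A z : B →ₗ[ℂ] B)))
    (hInv : ∀ᶠ z in 𝓝[≠] z₀, IsUnit (A z))
    (hNotInv : ¬ IsUnit (A z₀))
    (d : ℕ) (hd : 1 ≤ d)
    (hpole : HasPoleOrderAt (fun z => Ring.inverse (A z)) z₀ d)
    (P : ℕ → (B →L[ℂ] B)) (Aq : ℕ → ℂ → (B →L[ℂ] B))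
    (hAq0 : Aq 0 = A) (hP0 : P 0 = 0)
    (hPproj : ∀ k, P (k + 1) * P (k + 1) = P (k + 1))
    (hPrange : ∀ k, LinearMap.range (P (k + 1) : B →ₗ[ℂ] B) = LinearMap.range (Aq k z₀ : B →ₗ[ℂ] B))
    (hPker : ∀ k, LinearMap.ker (P (k + 1) : B →ₗ[ℂ] B) ≤ LinearMap.ker (P k : B →ₗ[ℂ] B))
    (hAqAnalytic : ∀ k, AnalyticOnNhd ℂ (Aq k) U)
    (hAqFact : ∀ k, ∀ z ∈ U,
      Aq k z = (P (k + 1) + (z - z₀) • ((1 : B →L[ℂ] B) - P (k + 1))) * Aq (k + 1) z)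
    (hstab : ∀ k, IsUnit (Aq k z₀) → P (k + 1) = 1 ∧ Aq (k + 1) = Aq k)
    :
    ∀ m : ℕ, 1 ≤ m →
      (d = m ↔ (IsUnit (Aq m z₀) ∧ ¬ IsUnit (Aq (m - 1) z₀))) := by
  have hzU : ∀ᶠ z in 𝓝[≠] z₀, z ∈ U :=
    (hU.eventually_mem hz₀U).filter_mono nhdsWithin_le_nhds
  have hne : ∀ᶠ z in 𝓝[≠] z₀, z ≠ z₀ := by
    filter_upwards [self_mem_nhdsWithin] with z hz using hz
  -- units eventually off z₀
  have hUnitAq : ∀ k, ∀ᶠ z in 𝓝[≠] z₀, IsUnit (Aq k z) := by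
    intro k
    induction k with
    | zero => simpa [hAq0] using hInv
    | succ k ih =>
      filter_upwards [ih, hzU, hne] with z hu hzU' hz
      have hM : IsUnit (P (k + 1) + (z - z₀) • ((1 : B →L[ℂ] B) - P (k + 1))) :=
        stmt9_proj_isUnit (hPproj k) (sub_ne_zero.mpr hz)
      have hfac := hAqFact k z hzU'
      obtain ⟨m, hm⟩ := hM
      have : Aq (k + 1) z = ↑m⁻¹ * Aq k z := by
        rw [hfac, ← hm, ← mul_assoc, Units.inv_mul, one_mul]
      rw [this]
      exact (m⁻¹.isUnit).mul hu
  -- the key induction: the pole order drops by one at each step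
  have hkey : ∀ k, k ≤ d →
      HasPoleOrderAt (fun z => Ring.inverse (Aq k z)) z₀ (d - k) := by
    intro k
    induction k with
    | zero => intro _; simpa [hAq0] using hpole
    | succ k ih =>
      intro hk1
      obtain ⟨h, hh, hh0, hev⟩ := ih (Nat.le_of_succ_le hk1)
      set n := d - (k + 1) with hn
      have hdk : d - k = n + 1 := by omega
      rw [hdk] at hev
      set P' : B →L[ℂ] B := P (k + 1) with hP'
      set Q' : B →L[ℂ] B := (1 : B →L[ℂ] B) - P' with hQ'
      have hPP : P' * P' = P' := hPproj k
      have hpq : P' * Q' = 0 := by rw [hQ', mul_sub, mul_one, hPP, sub_self]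
      have hqp : Q' * P' = 0 := by rw [hQ', sub_mul, one_mul, hPP, sub_self]
      have hqq : Q' * Q' = Q' := by
        rw [hQ']
        nth_rewrite 1 [mul_sub]
        rw [mul_one, ← hQ', hqp, sub_zero]
      -- step A : h z₀ * Aq k z₀ = 0
      have hevU : ∀ᶠ z in 𝓝[≠] z₀, h z * Aq k z = (z - z₀) ^ (n + 1) • (1 : B →L[ℂ] B) := by
        filter_upwards [hev, hUnitAq k, hne] with z hz hu hzne
        have hc : (z - z₀) ≠ 0 := sub_ne_zero.mpr hzne
        have hzh : h z = (z - z₀) ^ (n + 1) • Ring.inverse (Aq k z) := by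
          rw [hz, smul_smul, ← mul_pow, mul_inv_cancel₀ hc, one_pow, one_smul]
        rw [hzh, smul_mul_assoc, Ring.inverse_mul_cancel _ hu]
      have hAqkCont : ContinuousAt (Aq k) z₀ :=
        ((hAqAnalytic k) z₀ hz₀U).continuousAt
      have hA0 : h z₀ * Aq k z₀ = 0 := by
        have l1 : Filter.Tendsto (fun z => h z * Aq k z) (𝓝[≠] z₀) (𝓝 (h z₀ * Aq k z₀)) :=
          ((hh.continuousAt.mul hAqkCont).tendsto).mono_left nhdsWithin_le_nhds
        have l2 : Filter.Tendsto (fun z => (z - z₀) ^ (n + 1) • (1 : B →L[ℂ] B)) (𝓝[≠] z₀)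
            (𝓝 0) := by
          have t1 : Filter.Tendsto (fun z : ℂ => (z - z₀) ^ (n + 1)) (𝓝 z₀) (𝓝 0) := by
            have : Filter.Tendsto (fun z : ℂ => (z - z₀) ^ (n + 1)) (𝓝 z₀)
                (𝓝 ((z₀ - z₀) ^ (n + 1))) :=
              (((continuous_id.sub continuous_const).pow _).tendsto z₀)
            simpa using this
          have := t1.smul (tendsto_const_nhds :
            Filter.Tendsto (fun _ : ℂ => (1 : B →L[ℂ] B)) (𝓝 z₀) _)
          simpa using this.mono_left nhdsWithin_le_nhds
        exact tendsto_nhds_unique_of_eventuallyEq l1 l2 hevU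
      -- step B : h z₀ * P' = 0
      have hP'0 : h z₀ * P' = 0 := by
        ext x
        have hx : P' x ∈ LinearMap.range (Aq k z₀ : B →ₗ[ℂ] B) := by
          rw [← hPrange k]; exact LinearMap.mem_range_self _ x
        obtain ⟨y, hy⟩ := hx
        have h1 : (h z₀ * P') x = (h z₀ * Aq k z₀) y := by
          simp only [ContinuousLinearMap.coe_coe] at hy
          simp only [ContinuousLinearMap.mul_apply, hy]
        rw [h1, hA0]
        simp
      -- step C : factor h z * P' = (z - z₀) • G z
      obtain ⟨G, hG, hFG⟩ := stmt9_factor (hh.mul analyticAt_const :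
        AnalyticAt ℂ (fun z => h z * P') z₀) hP'0
      -- step D : the new analytic part
      set g₁ : ℂ → (B →L[ℂ] B) := fun z => G z + h z * Q' with hg₁
      have hg₁an : AnalyticAt ℂ g₁ z₀ := hG.add (hh.mul analyticAt_const)
      -- step E : eventual representation
      have hevE : ∀ᶠ z in 𝓝[≠] z₀,
          Ring.inverse (Aq (k + 1) z) = ((z - z₀)⁻¹) ^ n • g₁ z := by
        filter_upwards [hev, hUnitAq k, hzU, hne] with z hz hu hzU' hzne
        have hc : (z - z₀) ≠ 0 := sub_ne_zero.mpr hzne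
        have hMu : IsUnit (P' + (z - z₀) • Q') := by
          rw [hP', hQ', hP']
          exact stmt9_proj_isUnit (hPproj k) hc
        have hfac : Aq k z = (P' + (z - z₀) • Q') * Aq (k + 1) z := hAqFact k z hzU'
        have hinv1 : Ring.inverse (Aq (k + 1) z) =
            Ring.inverse (Aq k z) * (P' + (z - z₀) • Q') := by
          obtain ⟨u, huu⟩ := hu
          obtain ⟨m, hmm⟩ := hMu
          have h1 : Aq (k + 1) z = ↑(m⁻¹ * u) := by
            rw [Units.val_mul, huu, hfac, ← hmm, ← mul_assoc, Units.inv_mul, one_mul]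
          rw [h1, Ring.inverse_unit, mul_inv_rev, inv_inv, Units.val_mul, ← huu, ← hmm,
            Ring.inverse_unit]
        have hhP : (fun z => h z * P') z = (z - z₀) • G z := hFG z
        simp only at hhP
        have hmul : h z * (P' + (z - z₀) • Q') = (z - z₀) • g₁ z := by
          rw [mul_add, mul_smul_comm, hhP, hg₁, ← smul_add]
        rw [hinv1, hz, smul_mul_assoc, hmul, smul_smul, pow_succ, mul_assoc,
          inv_mul_cancel₀ hc, mul_one]
      -- step F : g₁ z₀ ≠ 0
      have hevF : ∀ᶠ z in 𝓝[≠] z₀, g₁ z * ((z - z₀) • P' + Q') = h z := by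
        filter_upwards [hne] with z hzne
        have hc : (z - z₀) ≠ 0 := sub_ne_zero.mpr hzne
        have hhP : (fun z => h z * P') z = (z - z₀) • G z := hFG z
        simp only at hhP
        have hGz : G z = (z - z₀)⁻¹ • (h z * P') := by
          rw [hhP, smul_smul, inv_mul_cancel₀ hc, one_smul]
        have t1 : G z * ((z - z₀) • P') = h z * P' := by
          rw [mul_smul_comm, hGz, smul_mul_assoc, smul_smul, mul_inv_cancel₀ hc, one_smul,
            mul_assoc, hPP]
        have t2 : G z * Q' = 0 := by
          rw [hGz, smul_mul_assoc, mul_assoc, hpq, mul_zero, smul_zero]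
        have t3 : (h z * Q') * ((z - z₀) • P') = 0 := by
          rw [mul_smul_comm, mul_assoc, hqp, mul_zero, smul_zero]
        have t4 : (h z * Q') * Q' = h z * Q' := by
          rw [mul_assoc, hqq]
        have hPQ1 : P' + Q' = 1 := by rw [hQ']; abel
        calc g₁ z * ((z - z₀) • P' + Q')
            = G z * ((z - z₀) • P') + G z * Q' + ((h z * Q') * ((z - z₀) • P')
              + (h z * Q') * Q') := by
              rw [hg₁]
              simp only [add_mul, mul_add]
              abel
          _ = h z := by
              rw [t1, t2, t3, t4, add_zero, zero_add, ← mul_add, hPQ1, mul_one]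
      have hg₁0 : g₁ z₀ ≠ 0 := by
        intro h0
        have l1 : Filter.Tendsto (fun z => g₁ z * ((z - z₀) • P' + Q')) (𝓝[≠] z₀)
            (𝓝 (g₁ z₀ * (((z₀ : ℂ) - z₀) • P' + Q'))) := by
          have : ContinuousAt (fun z => g₁ z * ((z - z₀) • P' + Q')) z₀ := by
            exact hg₁an.continuousAt.mul
              (((continuousAt_id.sub continuousAt_const).smul continuousAt_const).add
                continuousAt_const)
          exact this.tendsto.mono_left nhdsWithin_le_nhds
        have l2 : Filter.Tendsto h (𝓝[≠] z₀) (𝓝 (h z₀)) :=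
          hh.continuousAt.tendsto.mono_left nhdsWithin_le_nhds
        have heq := tendsto_nhds_unique_of_eventuallyEq l1 l2 hevF
        rw [h0, zero_mul] at heq
        exact hh0 heq.symm
      exact ⟨g₁, hg₁an, hg₁0, hevE⟩
  -- Aq d z₀ is a unit
  have hAqdUnit : IsUnit (Aq d z₀) := by
    obtain ⟨g, hg, hg0, hev⟩ := hkey d le_rfl
    rw [Nat.sub_self] at hev
    simp only [pow_zero, one_smul] at hev
    have hev1 : ∀ᶠ z in 𝓝[≠] z₀, g z * Aq d z = 1 ∧ Aq d z * g z = 1 := by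
      filter_upwards [hev, hUnitAq d] with z hz hu
      constructor
      · rw [← hz]; exact Ring.inverse_mul_cancel _ hu
      · rw [← hz]; exact Ring.mul_inverse_cancel _ hu
    have hc1 : ContinuousAt (Aq d) z₀ := ((hAqAnalytic d) z₀ hz₀U).continuousAt
    have e1 : g z₀ * Aq d z₀ = 1 := by
      have l1 : Filter.Tendsto (fun z => g z * Aq d z) (𝓝[≠] z₀) (𝓝 (g z₀ * Aq d z₀)) :=
        (hg.continuousAt.mul hc1).tendsto.mono_left nhdsWithin_le_nhds
      exact tendsto_nhds_unique_of_eventuallyEq l1 tendsto_const_nhds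
        (by filter_upwards [hev1] with z hz using hz.1)
    have e2 : Aq d z₀ * g z₀ = 1 := by
      have l1 : Filter.Tendsto (fun z => Aq d z * g z) (𝓝[≠] z₀) (𝓝 (Aq d z₀ * g z₀)) :=
        (hc1.mul hg.continuousAt).tendsto.mono_left nhdsWithin_le_nhds
      exact tendsto_nhds_unique_of_eventuallyEq l1 tendsto_const_nhds
        (by filter_upwards [hev1] with z hz using hz.2)
    exact ⟨⟨Aq d z₀, g z₀, e2, e1⟩, rfl⟩
  -- Aq k z₀ is not a unit for k < d
  have hAqkNot : ∀ k, k < d → ¬ IsUnit (Aq k z₀) := by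
    intro k hk hu
    obtain ⟨g, hg, hg0, hev⟩ := hkey k hk.le
    have hcont : Filter.Tendsto (fun z => Ring.inverse (Aq k z)) (𝓝 z₀)
        (𝓝 (Ring.inverse (Aq k z₀))) := by
      obtain ⟨u, hu'⟩ := hu
      have : ContinuousAt Ring.inverse (Aq k z₀) := by
        rw [← hu']; exact NormedRing.inverse_continuousAt u
      exact this.comp ((hAqAnalytic k) z₀ hz₀U).continuousAt
    have hev2 : ∀ᶠ z in 𝓝[≠] z₀, g z = (z - z₀) ^ (d - k) • Ring.inverse (Aq k z) := by
      filter_upwards [hev, hne] with z hz hzne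
      have hc : (z - z₀) ≠ 0 := sub_ne_zero.mpr hzne
      rw [hz, smul_smul, ← mul_pow, mul_inv_cancel₀ hc, one_pow, one_smul]
    have l1 : Filter.Tendsto g (𝓝[≠] z₀) (𝓝 (g z₀)) :=
      hg.continuousAt.tendsto.mono_left nhdsWithin_le_nhds
    have l2 : Filter.Tendsto (fun z => (z - z₀) ^ (d - k) • Ring.inverse (Aq k z)) (𝓝[≠] z₀)
        (𝓝 0) := by
      have t1 : Filter.Tendsto (fun z : ℂ => (z - z₀) ^ (d - k)) (𝓝 z₀) (𝓝 0) := by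
        have : Filter.Tendsto (fun z : ℂ => (z - z₀) ^ (d - k)) (𝓝 z₀)
            (𝓝 ((z₀ - z₀) ^ (d - k))) := ((continuous_id.sub continuous_const).pow _).tendsto z₀
        simpa [zero_pow (by omega : d - k ≠ 0)] using this
      have := t1.smul hcont
      simpa using this.mono_left nhdsWithin_le_nhds
    exact hg0 (tendsto_nhds_unique_of_eventuallyEq l1 l2 hev2)
  -- chain : once a unit, always stable
  have hchain : ∀ k i, IsUnit (Aq k z₀) → Aq (k + i) = Aq k := by
    intro k i hu
    induction i with
    | zero => rfl
    | succ i ih =>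
      have h1 : Aq (k + i + 1) = Aq (k + i) := (hstab (k + i) (by rw [ih]; exact hu)).2
      rw [show k + (i + 1) = k + i + 1 from rfl, h1, ih]
  intro m hm
  constructor
  · rintro rfl
    exact ⟨hAqdUnit, hAqkNot (d - 1) (by omega)⟩
  · rintro ⟨h1, h2⟩
    by_contra hdm
    rcases Nat.lt_or_ge d m with hlt | hge
    · have heq : Aq (m - 1) = Aq d := by
        have := hchain d (m - 1 - d) hAqdUnit
        rwa [show d + (m - 1 - d) = m - 1 by omega] at this
      exact h2 (heq ▸ hAqdUnit)
    · have hlt2 : m < d := by omega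
      exact hAqkNot m hlt2 h1
end

section
/- Let N₀ be a finite-dimensional subspace of H and let N₁, …, N_d be closed subspaces of H, each of finite codimension. Then ⋂_{j=0}^{d} N_j = {0} if and only if H = N₀^⊥ + N₁^⊥ + ⋯ + N_d^⊥ (the algebraic sum of the orthogonal complements equals all of H). -/
open Submodule

/-- If `N₀` is finite-dimensional and `S` is a subspace containing `N₀ᗮ` with trivial
orthogonal complement, then `S = ⊤`. -/
theorem aux_sup_top {H : Type*} [NormedAddCommGroup H] [InnerProductSpace ℂ H] [CompleteSpace H]
    (N0 S : Submodule ℂ H) [FiniteDimensional ℂ N0]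
    (hle : N0ᗮ ≤ S) (hS : Sᗮ = ⊥) : S = ⊤ := by
  haveI : CompleteSpace N0 := FiniteDimensional.complete ℂ N0
  set G : Submodule ℂ H := N0 ⊓ S with hG
  haveI : FiniteDimensional ℂ G :=
    Submodule.finiteDimensional_of_le (inf_le_left : G ≤ N0)
  haveI : CompleteSpace G := FiniteDimensional.complete ℂ G
  have hSeq : S = N0ᗮ ⊔ G := by
    apply le_antisymm
    · intro x hx
      have h1 : x - (orthogonalProjection N0 x : H) ∈ N0ᗮ :=
        sub_starProjection_mem_orthogonal (K := N0) x
      have h2 : (orthogonalProjection N0 x : H) ∈ G := by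
        refine ⟨(orthogonalProjection N0 x).2, ?_⟩
        have := S.sub_mem hx (hle h1)
        simpa using this
      rw [Submodule.mem_sup]
      exact ⟨x - (orthogonalProjection N0 x : H), h1,
        (orthogonalProjection N0 x : H), h2, by abel⟩
    · exact sup_le hle inf_le_right
  have hbot : N0 ⊓ Gᗮ = ⊥ := by
    rw [eq_bot_iff, ← hS, hSeq]
    rintro v ⟨hv1, hv2⟩
    have : v ∈ N0ᗮᗮ ⊓ Gᗮ := ⟨N0.le_orthogonal_orthogonal hv1, hv2⟩
    rwa [Submodule.inf_orthogonal] at this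
  have hGN0 : G = N0 := by
    have hmod : (G ⊔ Gᗮ) ⊓ N0 = G ⊔ (Gᗮ ⊓ N0) :=
      sup_inf_assoc_of_le _ (inf_le_left : G ≤ N0)
    rw [Submodule.sup_orthogonal_of_hasOrthogonalProjection, top_inf_eq, inf_comm Gᗮ N0, hbot,
      sup_bot_eq] at hmod
    exact hmod.symm
  rw [hSeq, hGN0, sup_comm]
  exact Submodule.sup_orthogonal_of_hasOrthogonalProjection

/-- Let `H` be a complex Hilbert space, `N₀` a finite-dimensional subspace of `H`
and `N₁, …, N_d` closed subspaces of `H` of finite codimension. Then `⋂_{j=0}^{d} N_j = {0}`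
if and only if `H = N₀^⊥ + N₁^⊥ + ⋯ + N_d^⊥` (the algebraic sum of the orthogonal
complements equals all of `H`). -/
theorem stmt12 {H : Type*} [NormedAddCommGroup H] [InnerProductSpace ℂ H] [CompleteSpace H]
    (d : ℕ) (N : ℕ → Submodule ℂ H)
    (hN0 : FiniteDimensional ℂ (N 0))
    (hclosed : ∀ j, 1 ≤ j → j ≤ d → IsClosed ((N j : Submodule ℂ H) : Set H))
    (hcodim : ∀ j, 1 ≤ j → j ≤ d → FiniteDimensional ℂ (H ⧸ N j)) :
    (⨅ j ∈ Finset.range (d + 1), N j) = ⊥ ↔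
      (∑ j ∈ Finset.range (d + 1), (N j)ᗮ) = ⊤ := by
  -- each `N j` (for `j` in range) is closed
  have hcl : ∀ j ∈ Finset.range (d + 1), IsClosed ((N j : Submodule ℂ H) : Set H) := by
    intro j hj
    rcases Nat.eq_zero_or_pos j with h0 | h1
    · subst h0; exact Submodule.closed_of_finiteDimensional (N 0)
    · have hj' := Finset.mem_range.mp hj
      exact hclosed j h1 (by omega)
  have hcompl : ∀ j ∈ Finset.range (d + 1), CompleteSpace (N j) := fun j hj =>
    (hcl j hj).completeSpace_coe
  -- sum of submodules equals the (bounded) supremum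
  have hsum : ∀ (K : ℕ → Submodule ℂ H) (s : Finset ℕ),
      (∑ j ∈ s, K j) = ⨆ j ∈ s, K j := by
    intro K s
    classical
    induction s using Finset.induction with
    | empty => simp
    | insert _ _ h ih =>
      rw [Finset.sum_insert h, ih, Submodule.add_eq_sup]
      exact (Finset.iSup_insert _ _ _).symm
  -- the orthogonal of the sum is the infimum
  have key : (∑ j ∈ Finset.range (d + 1), (N j)ᗮ)ᗮ = ⨅ j ∈ Finset.range (d + 1), N j := by
    rw [hsum]
    rw [iSup_subtype', iInf_subtype', ← Submodule.iInf_orthogonal]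
    congr 1
    funext j
    haveI := hcompl j j.2
    exact Submodule.orthogonal_orthogonal (N (j : ℕ))
  constructor
  · intro h
    have h0mem : (0 : ℕ) ∈ Finset.range (d + 1) := by simp
    refine aux_sup_top (N 0) _ ?_ (by rw [key, h])
    rw [hsum]
    exact le_iSup₂ (f := fun j _ => (N j)ᗮ) 0 h0mem
  · intro h
    rw [← key, h, Submodule.top_orthogonal_eq_bot]
end

section
/- For every w ∈ ℂ, the ordered product satisfies (P₁ + wQ₁)(P₂ + wQ₂) ⋯ (P_m + wQ_m) = ∑_{j=0}^{m} (P_{j+1} − P_j) w^j; moreover, if w ≠ 0, this operator is invertible in L(B) with inverse ∑_{j=0}^{m} (P_{j+1} − P_j) w^{−j}. -/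
open Finset

private lemma stmt15_left {B : Type*} [NormedAddCommGroup B] [NormedSpace ℂ B]
    (m : ℕ) (P : ℕ → (B →L[ℂ] B))
    (hproj : ∀ k ≤ m + 1, P k * P k = P k)
    (hrange : ∀ j ≤ m, LinearMap.range (P j : B →ₗ[ℂ] B) ≤ LinearMap.range (P (j + 1) : B →ₗ[ℂ] B)) :
    ∀ j k, j ≤ k → k ≤ m + 1 → P k * P j = P j := by
  have adj : ∀ k ≤ m, P (k + 1) * P k = P k := by
    intro k hk
    ext x
    obtain ⟨y, hy⟩ := hrange k hk ⟨x, rfl⟩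
    have h1 := DFunLike.congr_fun (hproj (k + 1) (by omega)) y
    simp only [ContinuousLinearMap.mul_apply] at h1 ⊢
    rw [← (show P (k + 1) y = P k x from hy), h1]
  intro j k hjk
  induction k, hjk using Nat.le_induction with
  | base => intro hk; exact hproj j hk
  | succ k hjk ih =>
    intro hk
    have hkm : k ≤ m := by omega
    calc P (k + 1) * P j = P (k + 1) * (P k * P j) := by rw [ih (by omega)]
      _ = (P (k + 1) * P k) * P j := by rw [mul_assoc]
      _ = P k * P j := by rw [adj k hkm]
      _ = P j := ih (by omega)

private lemma stmt15_right {B : Type*} [NormedAddCommGroup B] [NormedSpace ℂ B]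
    (m : ℕ) (P : ℕ → (B →L[ℂ] B))
    (hproj : ∀ k ≤ m + 1, P k * P k = P k)
    (hker : ∀ j ≤ m, LinearMap.ker (P (j + 1) : B →ₗ[ℂ] B) ≤ LinearMap.ker (P j : B →ₗ[ℂ] B)) :
    ∀ j k, j ≤ k → k ≤ m + 1 → P j * P k = P j := by
  have adj : ∀ k ≤ m, P k * P (k + 1) = P k := by
    intro k hk
    ext x
    have h1 := DFunLike.congr_fun (hproj (k + 1) (by omega)) x
    simp only [ContinuousLinearMap.mul_apply] at h1 ⊢
    have hmem : x - P (k + 1) x ∈ LinearMap.ker (P (k + 1) : B →ₗ[ℂ] B) := by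
      simp [map_sub, h1]
    have h2 := hker k hk hmem
    simp only [LinearMap.mem_ker] at h2
    rw [map_sub] at h2
    -- h2 : P k x - P k (P (k+1) x) = 0
    have := sub_eq_zero.mp (by exact_mod_cast h2)
    exact this.symm
  intro j k hjk
  induction k, hjk using Nat.le_induction with
  | base => intro hk; exact hproj j hk
  | succ k hjk ih =>
    intro hk
    have hkm : k ≤ m := by omega
    calc P j * P (k + 1) = (P j * P k) * P (k + 1) := by rw [ih (by omega)]
      _ = P j * (P k * P (k + 1)) := by rw [mul_assoc]
      _ = P j * P k := by rw [adj k hkm]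
      _ = P j := ih (by omega)

private lemma stmt15_E {B : Type*} [NormedAddCommGroup B] [NormedSpace ℂ B]
    (m : ℕ) (P : ℕ → (B →L[ℂ] B))
    (hL : ∀ j k, j ≤ k → k ≤ m + 1 → P k * P j = P j)
    (hR : ∀ j k, j ≤ k → k ≤ m + 1 → P j * P k = P j) :
    ∀ j k, j ≤ m → k ≤ m →
      (P (j + 1) - P j) * (P (k + 1) - P k)
        = if j = k then P (j + 1) - P j else 0 := by
  intro j k hj hk
  rcases lt_trichotomy j k with h | h | h
  · rw [if_neg (by omega)]
    have e1 : P (j + 1) * P (k + 1) = P (j + 1) := hR (j + 1) (k + 1) (by omega) (by omega)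
    have e2 : P (j + 1) * P k = P (j + 1) := hR (j + 1) k (by omega) (by omega)
    have e3 : P j * P (k + 1) = P j := hR j (k + 1) (by omega) (by omega)
    have e4 : P j * P k = P j := hR j k (by omega) (by omega)
    simp only [sub_mul, mul_sub, e1, e2, e3, e4]
    abel
  · subst h
    rw [if_pos rfl]
    have e1 : P (j + 1) * P (j + 1) = P (j + 1) := hR (j + 1) (j + 1) le_rfl (by omega)
    have e2 : P (j + 1) * P j = P j := hL j (j + 1) (by omega) (by omega)
    have e3 : P j * P (j + 1) = P j := hR j (j + 1) (by omega) (by omega)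
    have e4 : P j * P j = P j := hR j j le_rfl (by omega)
    simp only [sub_mul, mul_sub, e1, e2, e3, e4]
    abel
  · rw [if_neg (by omega)]
    have e1 : P (j + 1) * P (k + 1) = P (k + 1) := hL (k + 1) (j + 1) (by omega) (by omega)
    have e2 : P (j + 1) * P k = P k := hL k (j + 1) (by omega) (by omega)
    have e3 : P j * P (k + 1) = P (k + 1) := hL (k + 1) j (by omega) (by omega)
    have e4 : P j * P k = P k := hL k j (by omega) (by omega)
    simp only [sub_mul, mul_sub, e1, e2, e3, e4]
    abel

private lemma stmt15_mulS {B : Type*} [NormedAddCommGroup B] [NormedSpace ℂ B]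
    (m : ℕ) (P : ℕ → (B →L[ℂ] B))
    (hE : ∀ j k, j ≤ m → k ≤ m →
      (P (j + 1) - P j) * (P (k + 1) - P k)
        = if j = k then P (j + 1) - P j else 0)
    (w w' : ℂ) :
    (∑ j ∈ Finset.range (m + 1), w ^ j • (P (j + 1) - P j)) *
      (∑ j ∈ Finset.range (m + 1), w' ^ j • (P (j + 1) - P j))
      = ∑ j ∈ Finset.range (m + 1), (w * w') ^ j • (P (j + 1) - P j) := by
  rw [Finset.sum_mul_sum]
  refine Finset.sum_congr rfl fun j hj => ?_
  have hjm : j ≤ m := by simp at hj; omega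
  calc ∑ k ∈ Finset.range (m + 1), (w ^ j • (P (j + 1) - P j)) * (w' ^ k • (P (k + 1) - P k))
      = ∑ k ∈ Finset.range (m + 1), (if j = k then (w * w') ^ j • (P (j + 1) - P j) else 0) := by
        refine Finset.sum_congr rfl fun k hk => ?_
        have hkm : k ≤ m := by simp at hk; omega
        rw [smul_mul_smul_comm, hE j k hjm hkm]
        split_ifs with h
        · subst h; rw [mul_pow]
        · rw [smul_zero]
    _ = (w * w') ^ j • (P (j + 1) - P j) := by
        rw [Finset.sum_ite_eq]
        simp [hj]

private lemma stmt15_prod {B : Type*} [NormedAddCommGroup B] [NormedSpace ℂ B]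
    (m : ℕ) (P : ℕ → (B →L[ℂ] B)) (hP0 : P 0 = 0)
    (hL : ∀ j k, j ≤ k → k ≤ m + 1 → P k * P j = P j)
    (hR : ∀ j k, j ≤ k → k ≤ m + 1 → P j * P k = P j)
    (w : ℂ) :
    ∀ n ≤ m, ((List.range n).map
        (fun k => P (k + 1) + w • ((1 : B →L[ℂ] B) - P (k + 1)))).prod
      = (∑ j ∈ Finset.range n, w ^ j • (P (j + 1) - P j)) + w ^ n • (1 - P n) := by
  intro n
  induction n with
  | zero => intro _; simp [hP0]
  | succ n ih =>
    intro hn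
    have hnm : n ≤ m := by omega
    rw [List.range_succ, List.map_append, List.prod_append, ih hnm]
    simp only [List.map_cons, List.map_nil, List.prod_cons, List.prod_nil, mul_one]
    have h1 : (∑ j ∈ Finset.range n, w ^ j • (P (j + 1) - P j)) * P (n + 1)
        = ∑ j ∈ Finset.range n, w ^ j • (P (j + 1) - P j) := by
      rw [Finset.sum_mul]
      refine Finset.sum_congr rfl fun j hj => ?_
      have hjn : j < n := Finset.mem_range.mp hj
      rw [smul_mul_assoc, sub_mul, hR (j + 1) (n + 1) (by omega) (by omega),
        hR j (n + 1) (by omega) (by omega)]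
    have h2 : (∑ j ∈ Finset.range n, w ^ j • (P (j + 1) - P j)) * (1 - P (n + 1)) = 0 := by
      rw [mul_sub, mul_one, h1, sub_self]
    have h3 : ((1 : B →L[ℂ] B) - P n) * P (n + 1) = P (n + 1) - P n := by
      rw [sub_mul, one_mul, hR n (n + 1) (by omega) (by omega)]
    have h4 : ((1 : B →L[ℂ] B) - P n) * (1 - P (n + 1)) = 1 - P (n + 1) := by
      rw [sub_mul, one_mul, mul_sub, mul_one, hR n (n + 1) (by omega) (by omega)]
      abel
    rw [add_mul, mul_add, mul_add, smul_mul_assoc, smul_mul_assoc, h1, h3]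
    rw [mul_smul_comm, mul_smul_comm, h2, h4, smul_zero, add_zero]
    rw [Finset.sum_range_succ, smul_smul, pow_succ]
    abel

/-- Let `P₀ = 0, P₁, …, P_m, P_{m+1} = I` be continuous linear projections on a
complex Banach space `B` with `ran P_j ⊆ ran P_{j+1}` and `ker P_{j+1} ⊆ ker P_j` for
`0 ≤ j ≤ m`, and `Q_k = I − P_k`. Then for every `w ∈ ℂ`,
`(P₁ + wQ₁)(P₂ + wQ₂) ⋯ (P_m + wQ_m) = ∑_{j=0}^{m} (P_{j+1} − P_j) w^j`; moreover, if
`w ≠ 0`, this operator is invertible in `L(B)` with inverse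
`∑_{j=0}^{m} (P_{j+1} − P_j) w^{−j}`. -/
theorem stmt15 {B : Type*} [NormedAddCommGroup B] [NormedSpace ℂ B] [CompleteSpace B]
    (m : ℕ) (P : ℕ → (B →L[ℂ] B))
    (hP0 : P 0 = 0) (hPtop : P (m + 1) = 1)
    (hproj : ∀ k ≤ m + 1, P k * P k = P k)
    (hrange : ∀ j ≤ m, LinearMap.range (P j : B →ₗ[ℂ] B) ≤ LinearMap.range (P (j + 1) : B →ₗ[ℂ] B))
    (hker : ∀ j ≤ m, LinearMap.ker (P (j + 1) : B →ₗ[ℂ] B) ≤ LinearMap.ker (P j : B →ₗ[ℂ] B))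
    (w : ℂ) :
    ((List.range m).map
        (fun k => P (k + 1) + w • ((1 : B →L[ℂ] B) - P (k + 1)))).prod
      = ∑ j ∈ Finset.range (m + 1), w ^ j • (P (j + 1) - P j) ∧
    (w ≠ 0 →
      IsUnit (((List.range m).map
          (fun k => P (k + 1) + w • ((1 : B →L[ℂ] B) - P (k + 1)))).prod) ∧
      Ring.inverse (((List.range m).map
          (fun k => P (k + 1) + w • ((1 : B →L[ℂ] B) - P (k + 1)))).prod)
        = ∑ j ∈ Finset.range (m + 1), w⁻¹ ^ j • (P (j + 1) - P j)) := by
  have hL := stmt15_left m P hproj hrange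
  have hR := stmt15_right m P hproj hker
  have hE := stmt15_E m P hL hR
  have hprod : ((List.range m).map
        (fun k => P (k + 1) + w • ((1 : B →L[ℂ] B) - P (k + 1)))).prod
      = ∑ j ∈ Finset.range (m + 1), w ^ j • (P (j + 1) - P j) := by
    rw [stmt15_prod m P hP0 hL hR w m le_rfl, Finset.sum_range_succ, hPtop]
  refine ⟨hprod, fun hw => ?_⟩
  have hS1 : ∑ j ∈ Finset.range (m + 1), ((1 : ℂ)) ^ j • (P (j + 1) - P j) = 1 := by
    simp only [one_pow, one_smul]
    rw [Finset.sum_range_sub (f := P), hPtop, hP0, sub_zero]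
  have h1 : (∑ j ∈ Finset.range (m + 1), w ^ j • (P (j + 1) - P j)) *
      (∑ j ∈ Finset.range (m + 1), w⁻¹ ^ j • (P (j + 1) - P j)) = 1 := by
    rw [stmt15_mulS m P hE, mul_inv_cancel₀ hw, hS1]
  have h2 : (∑ j ∈ Finset.range (m + 1), w⁻¹ ^ j • (P (j + 1) - P j)) *
      (∑ j ∈ Finset.range (m + 1), w ^ j • (P (j + 1) - P j)) = 1 := by
    rw [stmt15_mulS m P hE, inv_mul_cancel₀ hw, hS1]
  set u : (B →L[ℂ] B)ˣ :=
    ⟨∑ j ∈ Finset.range (m + 1), w ^ j • (P (j + 1) - P j),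
     ∑ j ∈ Finset.range (m + 1), w⁻¹ ^ j • (P (j + 1) - P j), h1, h2⟩ with hu
  constructor
  · rw [hprod]; exact ⟨u, rfl⟩
  · rw [hprod, show (∑ j ∈ Finset.range (m + 1), w ^ j • (P (j + 1) - P j)) = (u : B →L[ℂ] B) from rfl,
      Ring.inverse_unit]
    rfl
end
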